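/- Let p be a prime, let S be a subset of 𝔽_p with |S| ≥ 2, and let k ≥ 1 and r ≥ 0 be integers. If φ₁, …, φ_k : 𝔽_p^n → 𝔽_p are r-separated mod-p forms, then for every (y₁, …, y_k) ∈ 𝔽_p^k one has |ℙ_{x∈S^n}(φ₁(x) = y₁, …, φ_k(x) = y_k) − p^{−k}| ≤ (1 − p^{−2})^r. -/

import Mathlib

open Finset

/-- The support of a mod-p form given by its coefficient vector. -/
def supp {p n : ℕ} (φ : Fin n → ZMod p) : Finset (Fin n) :=
  Finset.univ.filter fun i => φ i ≠ 0

/-- Evaluation of a mod-p form (given by coefficients) at a point. -/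
def evalForm {p n : ℕ} (φ x : Fin n → ZMod p) : ZMod p := ∑ i, φ i * x i

/-- The sumset a₁S + ⋯ + a_mS. -/
def sumsetSub {p m : ℕ} (a : Fin m → ZMod p) (S : Finset (ZMod p)) : Finset (ZMod p) :=
  (Fintype.piFinset fun _ : Fin m => S).image fun s => ∑ i, a i * s i

/-- L(S,E): smallest L such that for all nonzero a₁,…,a_L the sumset a₁S+⋯+a_LS ⊄ E. -/
noncomputable def LSE {p : ℕ} (S E : Finset (ZMod p)) : ℕ :=
  sInf {L : ℕ | ∀ a : Fin L → ZMod p, (∀ i, a i ≠ 0) → ¬ sumsetSub a S ⊆ E}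

/-- β(p,S) = |S|^{-⌈(p-1)/(|S|-1)⌉}. -/
noncomputable def betaPS (p : ℕ) (S : Finset (ZMod p)) : ℝ :=
  ((S.card : ℝ) ^ ⌈((p : ℝ) - 1) / ((S.card : ℝ) - 1)⌉₊)⁻¹

noncomputable def Complex.abs : AbsoluteValue ℂ ℝ := NormedField.toAbsoluteValue ℂ

lemma Circle.abs_coe (z : Circle) : Complex.abs (z : ℂ) = 1 := Circle.norm_coe z

lemma Complex.normSq_eq_abs (z : ℂ) : Complex.normSq z = Complex.abs z ^ 2 :=
  Complex.normSq_eq_norm_sq z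

lemma Complex.abs_natCast (m : ℕ) : Complex.abs (m : ℂ) = m := by
  show ‖(m : ℂ)‖ = m
  simp

lemma Complex.abs_ofReal (x : ℝ) : Complex.abs (x : ℂ) = |x| := by
  show ‖(x : ℂ)‖ = |x|
  simp

section AuxOCP
open Real

lemma cos_poly {x : ℝ} (h0 : 0 < x) (h1 : x ≤ 1) : (43/96) * x^2 ≤ 1 - Real.cos x := by
  have hx1 : |x| ≤ 1 := by rwa [abs_of_pos h0]
  have hb := Real.cos_bound hx1
  rw [abs_of_pos h0] at hb
  have hcos : Real.cos x ≤ 1 - x ^ 2 / 2 + x ^ 4 * (5 / 96) := by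
    have := (abs_le.mp hb).2; linarith
  have hx2 : x ^ 2 ≤ 1 := by nlinarith
  have hx4 : x ^ 4 ≤ x ^ 2 := by nlinarith [mul_le_of_le_one_right (sq_nonneg x) hx2]
  linarith

lemma one_sub_cos_ge {p : ℕ} (hp : 2 ≤ p) : 2 / (p : ℝ) ^ 2 ≤ 1 - Real.cos (π / p) := by
  have hp0 : (0:ℝ) < p := by positivity
  rcases eq_or_ne p 2 with rfl | h2
  · norm_num [Real.cos_pi_div_two]
  rcases eq_or_ne p 3 with rfl | h3
  · have h : ((3:ℕ):ℝ) = (3:ℝ) := by norm_num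
    rw [h, Real.cos_pi_div_three]; norm_num
  have hp4 : (4:ℝ) ≤ p := by exact_mod_cast (by omega : 4 ≤ p)
  have hpi : π ≤ 3.15 := by linarith [Real.pi_lt_d2]
  have hxpos : (0:ℝ) < π / p := by positivity
  have hxle : π / p ≤ 1 := by rw [div_le_one hp0]; nlinarith
  have hkey := cos_poly hxpos hxle
  have hxsq : 9 / (p:ℝ)^2 ≤ (π / p) ^ 2 := by
    rw [div_pow]
    gcongr
    nlinarith [Real.pi_gt_three]
  have : (43/96) * (9 / (p:ℝ)^2) ≤ (43/96) * (π/p)^2 := by linarith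
  have h2 : 2 / (p:ℝ)^2 ≤ (43/96) * (9 / (p:ℝ)^2) := by
    rw [mul_div_assoc', div_le_div_iff₀ (by positivity) (by positivity)]
    nlinarith [sq_nonneg ((p:ℝ))]
  linarith

lemma psi_map_sum {p : ℕ} [NeZero p] {ι : Type*} (s : Finset ι) (f : ι → ZMod p) :
    ZMod.stdAddChar (∑ i ∈ s, f i) = ∏ i ∈ s, ZMod.stdAddChar (f i) := by
  classical
  induction s using Finset.cons_induction with
  | empty => simp
  | cons a s ha ih => rw [Finset.sum_cons, Finset.prod_cons, AddChar.map_add_eq_mul, ih]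

lemma sum_psi_vec {p : ℕ} [NeZero p] {k : ℕ} (z : Fin k → ZMod p) :
    ∑ a : Fin k → ZMod p, ZMod.stdAddChar (∑ j, a j * z j)
      = if z = 0 then ((p:ℂ))^k else 0 := by
  classical
  simp_rw [psi_map_sum]
  rw [← Fintype.piFinset_univ, ← Finset.prod_univ_sum (fun _ : Fin k => (univ : Finset (ZMod p))) (fun j t => ZMod.stdAddChar (t * z j))]
  have hfac : ∀ j : Fin k, (∑ t : ZMod p, ZMod.stdAddChar (t * z j))
      = if z j = 0 then (p : ℂ) else 0 := by
    intro j
    rw [AddChar.sum_mulShift _ (ZMod.isPrimitive_stdAddChar p)]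
    simp [ZMod.card]
  simp_rw [hfac]
  by_cases hz : z = 0
  · simp [hz]
  · obtain ⟨j, hj⟩ := Function.ne_iff.mp hz
    simp only [Pi.zero_apply] at hj
    rw [Finset.prod_eq_zero (Finset.mem_univ j) (by simp [hj]), if_neg hz]

lemma abs_psi {p : ℕ} [NeZero p] (t : ZMod p) : Complex.abs (ZMod.stdAddChar t) = 1 := by
  rw [ZMod.stdAddChar_apply]; exact Circle.abs_coe _

lemma abs_one_add_psi {p : ℕ} [NeZero p] (hp : 2 ≤ p) {d : ZMod p} (hd : d ≠ 0) :
    Complex.abs (1 + ZMod.stdAddChar d) ≤ 2 * Real.cos (π / p) := by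
  have hp0 : (0:ℝ) < p := by positivity
  have hp2 : (2:ℝ) ≤ p := by exact_mod_cast hp
  set v : ℕ := d.val with hv
  have hv1 : 1 ≤ v := Nat.one_le_iff_ne_zero.mpr (by simpa [hv, ZMod.val_eq_zero] using hd)
  have h1v : (1:ℝ) ≤ v := by exact_mod_cast hv1
  have hvlt : (v:ℝ) + 1 ≤ p := by exact_mod_cast ZMod.val_lt d
  set θ : ℝ := 2 * π * v / p with hθ
  have hψ : ZMod.stdAddChar d = Complex.exp ((θ:ℝ) * Complex.I) := by
    rw [ZMod.stdAddChar_apply, ZMod.toCircle_apply, hθ]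
    rw [show ((2 * π * (v:ℝ) / p : ℝ) : ℂ) * Complex.I = 2 * ↑π * Complex.I * (v:ℝ) / p by
      push_cast; ring]
    norm_cast
  have habs2 : (Complex.abs (1 + ZMod.stdAddChar d))^2 = 2 + 2 * Real.cos θ := by
    rw [hψ, ← Complex.normSq_eq_abs, Complex.normSq_apply]
    simp only [Complex.add_re, Complex.add_im, Complex.one_re, Complex.one_im,
      Complex.exp_ofReal_mul_I_re, Complex.exp_ofReal_mul_I_im]
    nlinarith [Real.sin_sq_add_cos_sq θ]
  have hθlo : 2 * π / p ≤ θ := by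
    rw [hθ]
    exact (div_le_div_iff_of_pos_right hp0).mpr (by nlinarith [Real.pi_pos])
  have hθhi : θ ≤ 2 * π - 2 * π / p := by
    rw [hθ, div_le_iff₀ hp0, sub_mul, div_mul_cancel₀ _ hp0.ne']
    nlinarith [Real.pi_pos]
  have hpge : π / p ≤ π / 2 := by
    apply div_le_div_of_nonneg_left Real.pi_pos.le (by norm_num) hp2
  have hcosθ : Real.cos θ ≤ Real.cos (2 * π / p) := by
    rcases le_or_gt θ π with h | h
    · exact Real.cos_le_cos_of_nonneg_of_le_pi (by positivity) h hθlo
    · rw [← Real.cos_two_pi_sub]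
      apply Real.cos_le_cos_of_nonneg_of_le_pi (by positivity)
      · linarith
      · linarith
  have hcos_nonneg : 0 ≤ Real.cos (π / p) := by
    apply Real.cos_nonneg_of_mem_Icc
    constructor
    · have : (0:ℝ) ≤ π / p := by positivity
      linarith [Real.pi_pos]
    · exact hpge
  have hdouble : Real.cos (2 * π / p) = 2 * Real.cos (π / p)^2 - 1 := by
    rw [show 2 * π / (p:ℝ) = 2 * (π / p) by ring, Real.cos_two_mul]
  rw [hdouble] at hcosθ
  nlinarith [AbsoluteValue.nonneg Complex.abs (1 + ZMod.stdAddChar d)]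



lemma abs_pair_psi {p : ℕ} [NeZero p] (hp : 2 ≤ p) {u v : ZMod p} (huv : u ≠ v) :
    Complex.abs (ZMod.stdAddChar u + ZMod.stdAddChar v) ≤ 2 * Real.cos (π / p) := by
  have key : ZMod.stdAddChar u + ZMod.stdAddChar v
      = ZMod.stdAddChar v * (1 + ZMod.stdAddChar (u - v)) := by
    rw [mul_add, mul_one, ← AddChar.map_add_eq_mul]
    ring_nf
  rw [key, map_mul, abs_psi, one_mul]
  exact abs_one_add_psi hp (sub_ne_zero.mpr huv)

lemma abs_sum_psi {p : ℕ} [NeZero p] (hp : 2 ≤ p) (N : ℕ) (T : Finset (ZMod p))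
    (hT : T.card ≤ N) :
    Complex.abs (∑ t ∈ T, ZMod.stdAddChar t)
      ≤ T.card - (T.card / 2 : ℕ) * (2 * (1 - Real.cos (π / p))) := by
  induction N generalizing T with
  | zero =>
    have : T = ∅ := Finset.card_eq_zero.mp (Nat.le_zero.mp hT)
    simp [this]
  | succ N ih =>
    rcases le_or_gt T.card 1 with h1 | h1
    · interval_cases h : T.card
      · have : T = ∅ := Finset.card_eq_zero.mp h
        simp [this]
      · obtain ⟨u, rfl⟩ := Finset.card_eq_one.mp h
        simp [abs_psi]
    · -- T.card ≥ 2
      obtain ⟨u, hu⟩ := Finset.card_pos.mp (show 0 < T.card by omega)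
      have hcards : 1 ≤ (T.erase u).card := by
        rw [Finset.card_erase_of_mem hu]; omega
      obtain ⟨v, hv⟩ := Finset.card_pos.mp (show 0 < (T.erase u).card by omega)
      have huv : v ≠ u := Finset.ne_of_mem_erase hv
      set T' := (T.erase u).erase v with hT'
      have hsplit : ∑ t ∈ T, ZMod.stdAddChar t
          = (ZMod.stdAddChar u + ZMod.stdAddChar v) + ∑ t ∈ T', ZMod.stdAddChar t := by
        rw [← Finset.add_sum_erase _ _ hu, ← Finset.add_sum_erase _ _ hv]
        ring
      have hcard' : T'.card = T.card - 2 := by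
        rw [hT', Finset.card_erase_of_mem hv, Finset.card_erase_of_mem hu]
        omega
      have hih := ih T' (by omega)
      have hpair := abs_pair_psi hp huv.symm
      have htri := Complex.abs.add_le (ZMod.stdAddChar u + ZMod.stdAddChar v)
        (∑ t ∈ T', ZMod.stdAddChar t)
      rw [← hsplit] at htri
      -- arithmetic
      have hfloor : T.card / 2 = T'.card / 2 + 1 := by omega
      have hc2 : ((T'.card : ℝ)) = (T.card : ℝ) - 2 := by
        rw [hcard']; push_cast [Nat.cast_sub (by omega : 2 ≤ T.card)]; ring
      have hc3 : ((T.card / 2 : ℕ) : ℝ) = ((T'.card / 2 : ℕ) : ℝ) + 1 := by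
        rw [hfloor]; push_cast; ring
      have h2cos : 2 * Real.cos (π / p) = 2 - 2 * (1 - Real.cos (π / p)) := by ring
      rw [h2cos] at hpair
      rw [hc2] at hih
      rw [hc3]
      linarith



lemma coord_bound {p : ℕ} [NeZero p] (hpp : p.Prime) (S : Finset (ZMod p)) (hS : 2 ≤ S.card)
    {c : ZMod p} (hc : c ≠ 0) :
    Complex.abs (∑ s ∈ S, ZMod.stdAddChar (c * s))
      ≤ S.card * (1 - ((p:ℝ)⁻¹)^2) := by
  haveI : Fact p.Prime := ⟨hpp⟩
  have hp : 2 ≤ p := hpp.two_le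
  have hinj : Function.Injective (fun s : ZMod p => c * s) := mul_right_injective₀ hc
  have himg : ∑ s ∈ S, ZMod.stdAddChar (c * s)
      = ∑ t ∈ S.image (fun s => c * s), ZMod.stdAddChar t := by
    rw [Finset.sum_image (fun a _ b _ h => hinj h)]
  have hcardT : (S.image (fun s => c * s)).card = S.card :=
    Finset.card_image_of_injective _ hinj
  have key := abs_sum_psi hp (S.card) (S.image (fun s => c * s)) (le_of_eq hcardT)
  rw [himg]
  rw [hcardT] at key
  set m := S.card with hm
  set q := m / 2 with hq
  have hδ : 4 / (p:ℝ)^2 ≤ 2 * (1 - Real.cos (π / p)) := by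
    rw [show (4:ℝ)/(p:ℝ)^2 = 2*(2/(p:ℝ)^2) by ring]
    linarith [one_sub_cos_ge hp]
  have hq4 : (m:ℝ) ≤ 4 * (q:ℝ) := by
    have : m ≤ 4 * q := by omega
    exact_mod_cast this
  have hqnn : (0:ℝ) ≤ (q:ℝ) := by positivity
  have hp0 : (0:ℝ) < p := by positivity
  have hmain : (m:ℝ) - q * (2 * (1 - Real.cos (π / p))) ≤ m * (1 - ((p:ℝ)⁻¹)^2) := by
    have h1 : (q:ℝ) * (4 / (p:ℝ)^2) ≤ q * (2 * (1 - Real.cos (π / p))) :=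
      mul_le_mul_of_nonneg_left hδ hqnn
    have h2 : (m:ℝ) / (p:ℝ)^2 ≤ q * (4 / (p:ℝ)^2) := by
      rw [mul_div_assoc']
      gcongr
      linarith
    have h3 : (m:ℝ) * (1 - ((p:ℝ)⁻¹)^2) = m - m / (p:ℝ)^2 := by
      field_simp
    linarith
  linarith

end AuxOCP















theorem stmt_0 {p n : ℕ} (hp : p.Prime) (S : Finset (ZMod p)) (hS : 2 ≤ S.card)
    (k r : ℕ) (hk : 1 ≤ k) (φ : Fin k → Fin n → ZMod p)
    (hsep : ∀ a : Fin k → ZMod p, a ≠ 0 →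
      r ≤ (supp fun i => ∑ j, a j * φ j i).card)
    (y : Fin k → ZMod p) :
    |(((Fintype.piFinset fun _ : Fin n => S).filter
          fun x => ∀ i, evalForm (φ i) x = y i).card : ℝ) / (S.card : ℝ) ^ n
        - ((p : ℝ)⁻¹) ^ k| ≤ (1 - ((p : ℝ)⁻¹) ^ 2) ^ r := by
  classical
  haveI : NeZero p := ⟨hp.ne_zero⟩
  have hp2 : 2 ≤ p := hp.two_le
  have hpR : (2:ℝ) ≤ p := by exact_mod_cast hp2
  have hmR : (2:ℝ) ≤ S.card := by exact_mod_cast hS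
  set γ : ℝ := 1 - ((p:ℝ)⁻¹)^2 with hγdef
  have hγ0 : 0 ≤ γ := by
    rw [hγdef]
    have h1 : (p:ℝ)⁻¹ ≤ 1 := by
      rw [inv_le_one_iff₀]; right; linarith
    have h2 : (0:ℝ) ≤ (p:ℝ)⁻¹ := by positivity
    nlinarith
  have hγ1 : γ ≤ 1 := by
    rw [hγdef]
    nlinarith [sq_nonneg ((p:ℝ)⁻¹)]
  set T := Fintype.piFinset fun _ : Fin n => S with hTdef
  set Ncard := (T.filter fun x => ∀ i, evalForm (φ i) x = y i).card with hNdef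
  set F : (Fin k → ZMod p) → ℂ := fun a =>
    ∑ x ∈ T, ZMod.stdAddChar (∑ j, a j * (evalForm (φ j) x - y j)) with hFdef
  -- step 2 : total sum
  have hsum : ∑ a : Fin k → ZMod p, F a = (Ncard : ℂ) * (p:ℂ)^k := by
    rw [hFdef]
    rw [Finset.sum_comm]
    have hx : ∀ x ∈ T, ∑ a : Fin k → ZMod p,
        ZMod.stdAddChar (∑ j, a j * (evalForm (φ j) x - y j))
        = if (∀ i, evalForm (φ i) x = y i) then ((p:ℂ))^k else 0 := by
      intro x _
      rw [sum_psi_vec (fun j => evalForm (φ j) x - y j)]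
      congr 1
      simp only [eq_iff_iff]
      rw [funext_iff]
      constructor
      · intro h i; have := h i; simpa [sub_eq_zero] using this
      · intro h j; simp [sub_eq_zero, h j]
    rw [Finset.sum_congr rfl hx, ← Finset.sum_filter, Finset.sum_const, hNdef]
    simp [mul_comm]
  -- step 3 : F 0
  have hTcard : T.card = S.card ^ n := by
    rw [hTdef, Fintype.card_piFinset]
    simp
  have hF0 : F 0 = ((S.card : ℂ))^n := by
    rw [hFdef]
    simp only [Pi.zero_apply, zero_mul, Finset.sum_const_zero, AddChar.map_zero_eq_one]
    rw [Finset.sum_const, hTcard]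
    simp
  -- step 4 : per-a bound
  have hFa : ∀ a : Fin k → ZMod p, a ≠ 0 →
      Complex.abs (F a) ≤ (S.card:ℝ)^n * γ^r := by
    intro a ha
    set c : Fin n → ZMod p := fun i => ∑ j, a j * φ j i with hcdef
    have hlin : ∀ x : Fin n → ZMod p,
        ∑ j, a j * (evalForm (φ j) x - y j)
          = (∑ i, c i * x i) + (- ∑ j, a j * y j) := by
      intro x
      simp only [evalForm, mul_sub, Finset.sum_sub_distrib, Finset.mul_sum, hcdef,
        Finset.sum_mul]
      rw [Finset.sum_comm]
      rw [sub_eq_add_neg]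
      congr 1
      apply Finset.sum_congr rfl
      intro i _
      apply Finset.sum_congr rfl
      intro j _
      ring
    have hfact : F a = ZMod.stdAddChar (- ∑ j, a j * y j)
        * ∏ i, ∑ s ∈ S, ZMod.stdAddChar (c i * s) := by
      rw [hFdef]
      simp only [hlin]
      simp only [AddChar.map_add_eq_mul]
      rw [← Finset.sum_mul, mul_comm]
      congr 1
      rw [Finset.prod_univ_sum (fun _ : Fin n => S) (fun i s => ZMod.stdAddChar (c i * s))]
      rw [← hTdef]
      apply Finset.sum_congr rfl
      intro x _
      rw [psi_map_sum]
    rw [hfact, map_mul, abs_psi, one_mul, AbsoluteValue.map_prod]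
    have hpt : ∀ i : Fin n, Complex.abs (∑ s ∈ S, ZMod.stdAddChar (c i * s))
        ≤ if c i = 0 then (S.card:ℝ) else (S.card:ℝ) * γ := by
      intro i
      by_cases hci : c i = 0
      · rw [if_pos hci, hci]
        simp only [zero_mul, AddChar.map_zero_eq_one, Finset.sum_const, nsmul_eq_mul, mul_one]
        exact le_of_eq (Complex.abs_natCast _)
      · rw [if_neg hci]
        exact coord_bound hp S hS hci
    calc ∏ i, Complex.abs (∑ s ∈ S, ZMod.stdAddChar (c i * s))
        ≤ ∏ i, (if c i = 0 then (S.card:ℝ) else (S.card:ℝ) * γ) := by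
          apply Finset.prod_le_prod
          · intro i _; exact AbsoluteValue.nonneg _ _
          · intro i _; exact hpt i
      _ = (S.card:ℝ)^((univ.filter fun i => c i = 0).card)
            * ((S.card:ℝ) * γ)^((univ.filter fun i => ¬ c i = 0).card) := by
          rw [Finset.prod_ite]
          simp [Finset.prod_const]
      _ ≤ (S.card:ℝ)^n * γ^r := by
          have hsupp : (univ.filter fun i => ¬ c i = 0).card = (supp c).card := rfl
          have hcards : (univ.filter fun i => c i = 0).card
              + (univ.filter fun i => ¬ c i = 0).card = n := by
            rw [Finset.card_filter_add_card_filter_not]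
            simp
          have hr : r ≤ (univ.filter fun i => ¬ c i = 0).card := by
            rw [hsupp]; exact hsep a ha
          rw [mul_pow, ← mul_assoc, ← pow_add, hcards]
          apply mul_le_mul_of_nonneg_left _ (by positivity)
          exact pow_le_pow_of_le_one hγ0 hγ1 hr
  -- step 5: assemble
  have hENZ : ((S.card:ℂ)) ≠ 0 := by
    simp only [ne_eq, Nat.cast_eq_zero]; omega
  have hpNZ : ((p:ℂ)) ≠ 0 := by
    simp only [ne_eq, Nat.cast_eq_zero]; omega
  have hsplit : (Ncard : ℂ) * (p:ℂ)^k - ((S.card:ℂ))^n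
      = ∑ a ∈ (univ : Finset (Fin k → ZMod p)).erase 0, F a := by
    rw [← hsum, ← Finset.add_sum_erase _ F (Finset.mem_univ 0), hF0]
    ring
  have hX : (((Ncard : ℝ) / (S.card : ℝ) ^ n - ((p : ℝ)⁻¹) ^ k : ℝ) : ℂ)
      = (∑ a ∈ (univ : Finset (Fin k → ZMod p)).erase 0, F a)
        / ((p:ℂ)^k * ((S.card:ℂ))^n) := by
    rw [← hsplit, eq_div_iff (mul_ne_zero (pow_ne_zero _ hpNZ) (pow_ne_zero _ hENZ))]
    push_cast
    field_simp
    rw [one_div, sub_mul, mul_assoc, ← mul_pow, inv_mul_cancel₀ hpNZ, one_pow, mul_one]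
  have habs : |((Ncard : ℝ) / (S.card : ℝ) ^ n - ((p : ℝ)⁻¹) ^ k : ℝ)|
      = Complex.abs ((((Ncard : ℝ) / (S.card : ℝ) ^ n - ((p : ℝ)⁻¹) ^ k : ℝ)) : ℂ) := by
    rw [Complex.abs_ofReal]
  rw [habs, hX, map_div₀]
  have hdenom : Complex.abs ((p:ℂ)^k * ((S.card:ℂ))^n) = (p:ℝ)^k * (S.card:ℝ)^n := by
    rw [map_mul, map_pow, map_pow, Complex.abs_natCast, Complex.abs_natCast]
  rw [hdenom]
  have hnum : Complex.abs (∑ a ∈ (univ : Finset (Fin k → ZMod p)).erase 0, F a)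
      ≤ (p:ℝ)^k * ((S.card:ℝ)^n * γ^r) := by
    calc Complex.abs (∑ a ∈ (univ : Finset (Fin k → ZMod p)).erase 0, F a)
        ≤ ∑ a ∈ (univ : Finset (Fin k → ZMod p)).erase 0, Complex.abs (F a) := by
          exact Complex.abs.sum_le _ _
      _ ≤ ∑ a ∈ (univ : Finset (Fin k → ZMod p)).erase 0, (S.card:ℝ)^n * γ^r := by
          apply Finset.sum_le_sum
          intro a ha
          exact hFa a (Finset.ne_of_mem_erase ha)
      _ = ((univ : Finset (Fin k → ZMod p)).erase 0).card * ((S.card:ℝ)^n * γ^r) := by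
          rw [Finset.sum_const, nsmul_eq_mul]
      _ ≤ (p:ℝ)^k * ((S.card:ℝ)^n * γ^r) := by
          apply mul_le_mul_of_nonneg_right _ (by positivity)
          have h1 : ((univ : Finset (Fin k → ZMod p)).erase 0).card
              ≤ (univ : Finset (Fin k → ZMod p)).card := Finset.card_erase_le.trans (le_refl _)
          have h2 : (univ : Finset (Fin k → ZMod p)).card = p^k := by
            rw [Finset.card_univ, Fintype.card_fun, ZMod.card, Fintype.card_fin]
          calc (((univ : Finset (Fin k → ZMod p)).erase 0).card : ℝ)
              ≤ ((univ : Finset (Fin k → ZMod p)).card : ℝ) := by exact_mod_cast h1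
            _ = (p:ℝ)^k := by rw [h2]; push_cast; ring
    
  calc Complex.abs (∑ a ∈ (univ : Finset (Fin k → ZMod p)).erase 0, F a)
        / ((p:ℝ)^k * (S.card:ℝ)^n)
      ≤ ((p:ℝ)^k * ((S.card:ℝ)^n * γ^r)) / ((p:ℝ)^k * (S.card:ℝ)^n) := by
        exact div_le_div_of_nonneg_right hnum (by positivity)
    _ = γ^r := by
        field_simp
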